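/- Let p be a correlation with (p x y i j : ℂ) = (1/d)·Tr(P x i * Q y j) for POVMs (P x ·)_{x ∈ Fin nA} and (Q y ·)_{y ∈ Fin nB} with m outcomes on ℂ^d, such that P x i * P x j = P x j * P x i and Q y i * Q y j = Q y j * Q y i for all x, y, i, j. Then for every ε > 0 there exists q ∈ C_max(nA,nB,m) with |p x y i j − q x y i j| < ε for all x, y, i, j. -/

import Mathlib

open scoped BigOperators

/-- A correlation with `nA` questions for Alice, `nB` questions for Bob and `m` outcomes. -/
def IsCorrelation {nA nB m : ℕ} (p : Fin nA → Fin nB → Fin m → Fin m → ℝ) : Prop :=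
  (∀ x y i j, 0 ≤ p x y i j) ∧ ∀ x y, (∑ i, ∑ j, p x y i j) = 1

/-- A projection-valued measure with `m` outcomes on `ℂ^d`. -/
def IsPVM {d m : ℕ} (E : Fin m → Matrix (Fin d) (Fin d) ℂ) : Prop :=
  (∀ i, (E i).IsHermitian) ∧ (∀ i, E i * E i = E i) ∧ (∑ i, E i = 1)

/-- The set `C_{max,d}(nA,nB,m)` of maximally entangled correlations in dimension `d`. -/
def CmaxD (nA nB m d : ℕ) : Set (Fin nA → Fin nB → Fin m → Fin m → ℝ) :=
  {p | IsCorrelation p ∧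
    ∃ (E : Fin nA → Fin m → Matrix (Fin d) (Fin d) ℂ)
      (F : Fin nB → Fin m → Matrix (Fin d) (Fin d) ℂ),
      (∀ x, IsPVM (E x)) ∧ (∀ y, IsPVM (F y)) ∧
      ∀ x y i j, (p x y i j : ℂ) = (1 / (d : ℂ)) * (E x i * F y j).trace}

/-- The set `C_max(nA,nB,m)` of maximally entangled correlations. -/
def Cmax (nA nB m : ℕ) : Set (Fin nA → Fin nB → Fin m → Fin m → ℝ) :=
  ⋃ (d : ℕ) (_ : 1 ≤ d), CmaxD nA nB m d

/-- A correlation with the same questions for Alice and Bob is synchronous if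
`p x x i j = 0` whenever `i ≠ j`. -/
def Synchronous {n m : ℕ} (p : Fin n → Fin n → Fin m → Fin m → ℝ) : Prop :=
  ∀ x i j, i ≠ j → p x x i j = 0

/-- The set `C_max^s(n,m)` of synchronous maximally entangled correlations. -/
def CmaxSync (n m : ℕ) : Set (Fin n → Fin n → Fin m → Fin m → ℝ) :=
  {p ∈ Cmax n n m | Synchronous p}

open scoped ComplexOrder in
/-- A positive operator-valued measure with `m` outcomes on `ℂ^d`. -/
def IsPOVM {d m : ℕ} (P : Fin m → Matrix (Fin d) (Fin d) ℂ) : Prop :=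
  (∀ i, (P i).PosSemidef) ∧ (∑ i, P i = 1)

open Matrix Complex

open Module.End Module

lemma jointONB {E : Type*} [NormedAddCommGroup E] [InnerProductSpace ℂ E]
    [FiniteDimensional ℂ E] {n : ℕ} (T : Fin n → E →ₗ[ℂ] E)
    (hsym : ∀ i, (T i).IsSymmetric) (hcomm : ∀ i j, Commute (T i) (T j)) :
    ∃ (b : OrthonormalBasis (Fin (finrank ℂ E)) ℂ E)
      (μ : Fin n → Fin (finrank ℂ E) → ℂ),
      ∀ i k, T i (b k) = μ i k • b k := by
  classical
  let ι : Type _ := ∀ i : Fin n, Module.End.Eigenvalues (T i)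
  let V : ι → Submodule ℂ E := fun χ => ⨅ i, eigenspace (T i) (χ i)
  have hortho : OrthogonalFamily ℂ (fun χ : ι => V χ) (fun χ => (V χ).subtypeₗᵢ) := by
    have h1 := LinearMap.IsSymmetric.orthogonalFamily_iInf_eigenspaces hsym
    exact h1.comp (f := fun χ : ι => fun i => ((χ i : ℂ)))
      (fun χ χ' h => funext fun i => Subtype.ext (congrFun h i))
  have hsup : ⨆ χ : ι, V χ = ⊤ := by
    apply le_antisymm le_top
    rw [← LinearMap.IsSymmetric.iSup_iInf_eq_top_of_commute hsym
      (fun i j _ => hcomm i j)]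
    apply iSup_le; intro γ
    by_cases hγ : ∀ i, Module.End.HasEigenvalue (T i) (γ i)
    · exact le_iSup_of_le (fun i => ⟨γ i, hγ i⟩) le_rfl
    · push_neg at hγ; obtain ⟨i, hi⟩ := hγ
      have hbot : eigenspace (T i) (γ i) = ⊥ := not_not.mp (fun h => hi (hasEigenvalue_iff.mpr h))
      calc ⨅ j, eigenspace (T j) (γ j) ≤ eigenspace (T i) (γ i) := iInf_le _ i
        _ = ⊥ := hbot
        _ ≤ _ := bot_le
  have hint : DirectSum.IsInternal V :=
    hortho.isInternal_iff.mpr (by rw [hsup, Submodule.top_orthogonal_eq_bot])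
  refine ⟨hint.subordinateOrthonormalBasis rfl hortho,
    fun i k => (hint.subordinateOrthonormalBasisIndex rfl k hortho) i, ?_⟩
  intro i k
  have hmem := hint.subordinateOrthonormalBasis_subordinate rfl k hortho
  exact mem_eigenspace_iff.mp ((Submodule.mem_iInf _).mp hmem i)

noncomputable section
namespace CPA
variable {d : ℕ}

def ou (u v : Fin d → ℂ) : Matrix (Fin d) (Fin d) ℂ :=
  Matrix.of fun k k' => u k * (starRingEnd ℂ) (v k')

lemma ou_mul_ou (u v w z : Fin d → ℂ) :
    ou u v * ou w z = (∑ j, (starRingEnd ℂ) (v j) * w j) • ou u z := by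
  ext k k'
  simp only [ou, Matrix.mul_apply, Matrix.smul_apply, Matrix.of_apply, smul_eq_mul,
    Finset.sum_mul]
  congr 1; ext j; ring

lemma ou_trace (u v : Fin d → ℂ) : (ou u v).trace = ∑ k, u k * (starRingEnd ℂ) (v k) := by
  simp [Matrix.trace, Matrix.diag, ou]

lemma ou_conjTranspose (u v : Fin d → ℂ) : (ou u v)ᴴ = ou v u := by
  ext k k'
  simp [ou, Matrix.conjTranspose_apply, mul_comm]

lemma ou_mulVec (u v w : Fin d → ℂ) :
    (ou u v) *ᵥ w = (∑ j, (starRingEnd ℂ) (v j) * w j) • u := by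
  ext k
  simp only [ou, Matrix.mulVec, dotProduct, Matrix.of_apply, Pi.smul_apply, smul_eq_mul,
    Finset.sum_mul]
  congr 1; ext j; ring

section basis
variable (b : OrthonormalBasis (Fin d) ℂ (EuclideanSpace ℂ (Fin d)))

def uu (r k : Fin d) : ℂ := b r k

lemma col_ortho (r r' : Fin d) :
    ∑ k, (starRingEnd ℂ) (uu b r k) * uu b r' k = if r = r' then 1 else 0 := by
  have h := orthonormal_iff_ite.mp b.orthonormal r r'
  rw [PiLp.inner_apply] at h
  simpa [uu, RCLike.inner_apply, mul_comm] using h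

lemma sum_ou : ∑ r, ou (uu b r) (uu b r) = 1 := by
  classical
  let A : Matrix (Fin d) (Fin d) ℂ := Matrix.of fun k r => uu b r k
  have hAA : Aᴴ * A = 1 := by
    ext r r'
    simpa [A, Matrix.mul_apply, Matrix.conjTranspose_apply, Matrix.one_apply]
      using col_ortho b r r'
  have hAA' : A * Aᴴ = 1 := mul_eq_one_comm.mp hAA
  ext k k'
  have h2 := congrFun (congrFun hAA' k) k'
  simp only [A, Matrix.mul_apply, Matrix.conjTranspose_apply, Matrix.of_apply] at h2
  simpa [ou, Matrix.sum_apply] using h2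

lemma matrix_ext_basis {A B : Matrix (Fin d) (Fin d) ℂ}
    (h : ∀ r, A *ᵥ uu b r = B *ᵥ uu b r) : A = B := by
  have hb : ∀ r, (b.toBasis.map (WithLp.linearEquiv 2 ℂ (Fin d → ℂ))) r = uu b r := by
    intro r; simp [Basis.map_apply, uu]; rfl
  apply Matrix.toLin'.injective
  apply Basis.ext (b.toBasis.map (WithLp.linearEquiv 2 ℂ (Fin d → ℂ)))
  intro r
  rw [hb]
  simpa [Matrix.toLin'_apply] using h r

end basis
end CPA

namespace CPA2
open CPA Module

lemma sum_mulVec {d : ℕ} {ι : Type*} (s : Finset ι) (M : ι → Matrix (Fin d) (Fin d) ℂ)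
    (v : Fin d → ℂ) : (∑ i ∈ s, M i) *ᵥ v = ∑ i ∈ s, M i *ᵥ v := by
  ext k
  simp only [Matrix.mulVec, dotProduct, Matrix.sum_apply, Finset.sum_apply, Finset.sum_mul]
  rw [Finset.sum_comm]

open scoped ComplexOrder in
lemma povm_spectral {d m : ℕ} {P : Fin m → Matrix (Fin d) (Fin d) ℂ}
    (hpsd : ∀ i, (P i).PosSemidef) (hsum : ∑ i, P i = 1)
    (hcomm : ∀ i j, P i * P j = P j * P i) :
    ∃ (b : OrthonormalBasis (Fin d) ℂ (EuclideanSpace ℂ (Fin d)))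
      (lam : Fin m → Fin d → ℝ),
      (∀ i r, 0 ≤ lam i r) ∧ (∀ r, ∑ i, lam i r = 1) ∧
      (∀ i, P i = ∑ r, (lam i r : ℂ) • ou (uu b r) (uu b r)) := by
  classical
  set T : Fin m → (EuclideanSpace ℂ (Fin d)) →ₗ[ℂ] (EuclideanSpace ℂ (Fin d)) :=
    fun i => Matrix.toEuclideanLin (P i) with hT
  have hmulT : ∀ i j, T i ∘ₗ T j = Matrix.toEuclideanLin (P i * P j) := by
    intro i j
    apply LinearMap.ext; intro x
    simp [hT, Matrix.toEuclideanLin_apply, Matrix.mulVec_mulVec, LinearMap.comp_apply]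
  have hsymT : ∀ i, (T i).IsSymmetric := fun i =>
    Matrix.isHermitian_iff_isSymmetric.mp (hpsd i).1
  have hcommT : ∀ i j, Commute (T i) (T j) := by
    intro i j
    show T i * T j = T j * T i
    rw [Module.End.mul_eq_comp, Module.End.mul_eq_comp, hmulT, hmulT, hcomm]
  obtain ⟨b0, μ0, hb0⟩ := jointONB T hsymT hcommT
  have hfr : finrank ℂ (EuclideanSpace ℂ (Fin d)) = d := finrank_euclideanSpace_fin
  let b := b0.reindex (finCongr hfr)
  set μ : Fin m → Fin d → ℂ := fun i r => μ0 i ((finCongr hfr).symm r) with hμ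
  have heig : ∀ i r, T i (b r) = μ i r • b r := by
    intro i r
    simpa [b, OrthonormalBasis.coe_reindex, hμ] using hb0 i ((finCongr hfr).symm r)
  have heq : ∀ r, (WithLp.equiv 2 (Fin d → ℂ)) (b r) = uu b r := fun r => rfl
  have heigM : ∀ i r, P i *ᵥ uu b r = μ i r • uu b r := by
    intro i r
    have h2 := congrArg (WithLp.equiv 2 (Fin d → ℂ)) (heig i r)
    exact (by simpa [hT] using h2 : P i *ᵥ (b r).ofLp = μ i r • (b r).ofLp)
  have hnorm : ∀ r, ∑ k, (starRingEnd ℂ) (uu b r k) * uu b r k = 1 := by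
    intro r; simpa using col_ortho b r r
  have hmu_eval : ∀ i r, (star (uu b r)) ⬝ᵥ (P i *ᵥ uu b r) = μ i r := by
    intro i r
    rw [heigM]
    have h3 : ∀ k, star (uu b r) k * (μ i r • uu b r) k
        = μ i r * ((starRingEnd ℂ) (uu b r k) * uu b r k) := by
      intro k; simp only [Pi.star_apply, Pi.smul_apply, smul_eq_mul, RCLike.star_def]; ring
    rw [dotProduct]
    simp only [h3]
    rw [← Finset.mul_sum, hnorm, mul_one]
  have hpos : ∀ i r, 0 ≤ μ i r := by
    intro i r
    have h4 := (hpsd i).dotProduct_mulVec_nonneg (uu b r)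
    rwa [hmu_eval] at h4
  have him : ∀ i r, (μ i r).im = 0 := fun i r => by
    have h5 := hpos i r; rw [Complex.le_def] at h5; simpa using h5.2.symm
  have hre : ∀ i r, 0 ≤ (μ i r).re := fun i r => by
    have h5 := hpos i r; rw [Complex.le_def] at h5; simpa using h5.1
  have hμre : ∀ i r, ((μ i r).re : ℂ) = μ i r := fun i r =>
    Complex.ext (by simp) (by simp [him])
  have hexists : ∀ r, ∃ k, uu b r k ≠ 0 := by
    intro r
    by_contra h
    push_neg at h
    have := hnorm r
    simp only [h, map_zero, zero_mul, mul_zero, Finset.sum_const_zero] at this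
    exact zero_ne_one this
  have hsumμ : ∀ r, ∑ i, μ i r = 1 := by
    intro r
    have h1 : (∑ i, P i) *ᵥ uu b r = uu b r := by rw [hsum, Matrix.one_mulVec]
    have h2 : (∑ i, P i) *ᵥ uu b r = (∑ i, μ i r) • uu b r := by
      rw [sum_mulVec]
      simp only [heigM]
      rw [← Finset.sum_smul]
    obtain ⟨k0, hk0⟩ := hexists r
    have h3 := congrFun (h2.symm.trans h1) k0
    simp only [Pi.smul_apply, smul_eq_mul] at h3
    have h4 : (∑ i, μ i r) * uu b r k0 = 1 * uu b r k0 := by rw [one_mul]; exact h3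
    exact mul_right_cancel₀ hk0 h4
  refine ⟨b, fun i r => (μ i r).re, fun i r => hre i r, ?_, ?_⟩
  · intro r
    have h6 : (∑ i, μ i r).re = 1 := by rw [hsumμ r]; simp
    rw [Complex.re_sum] at h6
    exact h6
  · intro i
    apply matrix_ext_basis b
    intro s
    rw [heigM]
    have h7 : (∑ r, ((μ i r).re : ℂ) • ou (uu b r) (uu b r)) *ᵥ uu b s
        = ∑ r, ((μ i r).re : ℂ) • ((ou (uu b r) (uu b r)) *ᵥ uu b s) := by
      rw [sum_mulVec]
      congr 1; ext r; rw [Matrix.smul_mulVec]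
    rw [h7]
    have h8 : ∀ r, ((μ i r).re : ℂ) • (ou (uu b r) (uu b r) *ᵥ uu b s)
        = (if r = s then μ i s • uu b s else 0) := by
      intro r
      rw [ou_mulVec, col_ortho]
      by_cases h : r = s
      · subst h; simp [hμre]
      · simp [h]
    simp only [h8]
    simp
end CPA2

namespace CPA3

/-- cumulative sums -/
def A {m : ℕ} (a : Fin m → ℕ) (t : ℕ) : ℕ :=
  ∑ j ∈ Finset.range t, if h : j < m then a ⟨j, h⟩ else 0

lemma A_mono {m : ℕ} (a : Fin m → ℕ) : Monotone (A a) := fun s t hst =>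
  Finset.sum_le_sum_of_subset (Finset.range_subset_range.mpr hst)

lemma A_succ {m : ℕ} (a : Fin m → ℕ) (i : Fin m) :
    A a (i.val + 1) = A a i.val + a i := by
  rw [A, Finset.sum_range_succ, dif_pos i.isLt]
  rfl

lemma A_top {m N : ℕ} (a : Fin m → ℕ) (hsum : ∑ i, a i = N) : A a m = N := by
  rw [A, ← hsum, ← Fin.sum_univ_eq_sum_range (fun j => if h : j < m then a ⟨j, h⟩ else 0) m]
  exact Finset.sum_congr rfl fun i _ => by rw [dif_pos i.isLt]

lemma exists_unique_block {m N : ℕ} (hm : 0 < m) (a : Fin m → ℕ) (hsum : ∑ i, a i = N)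
    (s : Fin N) : ∃! i : Fin m, A a i.val ≤ s.val ∧ s.val < A a (i.val + 1) := by
  classical
  set fs := (Finset.range m).filter (fun j => A a j ≤ s.val) with hfs
  have hne : fs.Nonempty := ⟨0, by rw [hfs, Finset.mem_filter]; simp [hm, A]⟩
  set j1 := fs.max' hne with hj1
  have hj1mem : j1 ∈ fs := fs.max'_mem hne
  have hj1lt : j1 < m := Finset.mem_range.mp (Finset.mem_filter.mp hj1mem).1
  have hj1le : A a j1 ≤ s.val := (Finset.mem_filter.mp hj1mem).2
  refine ⟨⟨j1, hj1lt⟩, ⟨hj1le, ?_⟩, ?_⟩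
  · show s.val < A a (j1 + 1)
    by_contra hcon
    push_neg at hcon
    have hj1m : j1 + 1 < m ∨ j1 + 1 = m := by omega
    rcases hj1m with h | h
    · have : j1 + 1 ∈ fs := by
        rw [hfs, Finset.mem_filter, Finset.mem_range]
        exact ⟨h, hcon⟩
      have := fs.le_max' _ this
      omega
    · have hAm : A a (j1+1) = N := by rw [h]; exact A_top a hsum
      have := s.isLt
      omega
  · rintro i ⟨h1, h2⟩
    apply Fin.ext
    show i.val = j1
    by_contra hne2
    rcases Nat.lt_or_ge i.val j1 with h | h
    · have : A a (i.val + 1) ≤ A a j1 := A_mono a (by omega)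
      omega
    · have hgt : j1 < i.val := by omega
      have hmem : i.val ∈ fs := by
        rw [hfs, Finset.mem_filter, Finset.mem_range]
        exact ⟨i.isLt, h1⟩
      have := fs.le_max' _ hmem
      omega

lemma sum_indicator_eq_one {m N : ℕ} (hm : 0 < m) (a : Fin m → ℕ) (hsum : ∑ i, a i = N)
    (s : Fin N) :
    ∑ i : Fin m, (if A a i.val ≤ s.val ∧ s.val < A a (i.val + 1) then (1:ℂ) else 0) = 1 := by
  classical
  obtain ⟨i0, hi0, huniq⟩ := exists_unique_block hm a hsum s
  rw [Finset.sum_eq_single i0]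
  · rw [if_pos hi0]
  · intro j _ hj
    rw [if_neg (fun hc => hj (huniq j hc))]
  · intro h; exact absurd (Finset.mem_univ i0) h

lemma count_indicator {m N : ℕ} (a : Fin m → ℕ) (hsum : ∑ i, a i = N) (i : Fin m) :
    ∑ s : Fin N, (if A a i.val ≤ s.val ∧ s.val < A a (i.val + 1) then (1:ℂ) else 0)
      = (a i : ℂ) := by
  classical
  rw [Fin.sum_univ_eq_sum_range (fun t => if A a i.val ≤ t ∧ t < A a (i.val + 1) then (1:ℂ) else 0) N]
  have hsub : A a (i.val + 1) ≤ N := by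
    have := A_mono a (Nat.succ_le_of_lt i.isLt)
    rw [A_top a hsum] at this
    exact this
  have hfilter : (Finset.range N).filter (fun t => A a i.val ≤ t ∧ t < A a (i.val + 1))
      = Finset.Ico (A a i.val) (A a (i.val + 1)) := by
    ext t
    simp only [Finset.mem_filter, Finset.mem_range, Finset.mem_Ico]
    constructor
    · rintro ⟨_, h2, h3⟩; exact ⟨h2, h3⟩
    · rintro ⟨h2, h3⟩; exact ⟨lt_of_lt_of_le h3 hsub, h2, h3⟩
  rw [Finset.sum_boole, hfilter, Nat.card_Ico, A_succ]
  simp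

lemma nat_approx {m : ℕ} (hm : 0 < m) (lam : Fin m → ℝ) (hnn : ∀ i, 0 ≤ lam i)
    (hsum : ∑ i, lam i = 1) {N : ℕ} (hN : 0 < N) :
    ∃ a : Fin m → ℕ, (∑ i, a i = N) ∧ ∀ i, |lam i - (a i : ℝ) / N| ≤ m / N := by
  classical
  have hNr : (0:ℝ) < N := by exact_mod_cast hN
  have hm1 : (1:ℝ) ≤ m := by exact_mod_cast hm
  set i0 : Fin m := ⟨0, hm⟩ with hi0
  set S : ℕ := ∑ i ∈ Finset.univ.erase i0, ⌊(N : ℝ) * lam i⌋₊ with hS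
  have hfl_le : ∀ i : Fin m, (⌊(N:ℝ) * lam i⌋₊ : ℝ) ≤ N * lam i := fun i =>
    Nat.floor_le (mul_nonneg hNr.le (hnn i))
  have hfl_gt : ∀ i : Fin m, (N:ℝ) * lam i < ⌊(N:ℝ) * lam i⌋₊ + 1 := fun i =>
    Nat.lt_floor_add_one _
  have hSR : (S : ℝ) ≤ N := by
    rw [hS]
    push_cast
    calc ∑ i ∈ Finset.univ.erase i0, (⌊(N:ℝ) * lam i⌋₊:ℝ)
        ≤ ∑ i ∈ Finset.univ.erase i0, (N:ℝ) * lam i :=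
          Finset.sum_le_sum (fun i _ => hfl_le i)
      _ ≤ ∑ i, (N:ℝ) * lam i :=
          Finset.sum_le_sum_of_subset_of_nonneg (Finset.erase_subset _ _)
            (fun i _ _ => mul_nonneg hNr.le (hnn i))
      _ = N := by rw [← Finset.mul_sum, hsum, mul_one]
  have hSN : S ≤ N := by exact_mod_cast hSR
  have habs : ∀ (x F : ℝ), |(N:ℝ) * x - F| ≤ (m:ℝ) → |x - F/N| ≤ m/N := by
    intro x F h
    have hxF : x - F/N = ((N:ℝ)*x - F)/N := by field_simp
    rw [hxF, abs_div, abs_of_pos hNr]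
    gcongr
  refine ⟨fun i => if i = i0 then N - S else ⌊(N:ℝ) * lam i⌋₊, ?_, ?_⟩
  · rw [← Finset.add_sum_erase _ _ (Finset.mem_univ i0),
      Finset.sum_congr rfl (fun i hi => if_neg (Finset.ne_of_mem_erase hi)), ← hS, if_pos rfl,
      Nat.sub_add_cancel hSN]
  · intro i
    beta_reduce
    by_cases h : i = i0
    · subst h
      rw [if_pos rfl]
      apply habs
      have hcast : ((N - S : ℕ) : ℝ) = (N:ℝ) - S := by
        push_cast [Nat.cast_sub hSN]; ring
      rw [hcast]
      have hlam0 : (N:ℝ) * lam i0 = (N:ℝ) - ∑ j ∈ Finset.univ.erase i0, (N:ℝ) * lam j := by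
        have h1 : lam i0 + ∑ j ∈ Finset.univ.erase i0, lam j = 1 := by
          rw [Finset.add_sum_erase _ _ (Finset.mem_univ i0), hsum]
        rw [← Finset.mul_sum]
        nlinarith [h1]
      rw [hlam0]
      have heq : (N:ℝ) - ∑ j ∈ Finset.univ.erase i0, (N:ℝ) * lam j - ((N:ℝ) - S)
          = ∑ j ∈ Finset.univ.erase i0, ((⌊(N:ℝ) * lam j⌋₊ : ℝ) - (N:ℝ) * lam j) := by
        rw [Finset.sum_sub_distrib]
        rw [hS]
        push_cast
        ring
      rw [heq]
      calc |∑ j ∈ Finset.univ.erase i0, ((⌊(N:ℝ) * lam j⌋₊ : ℝ) - (N:ℝ) * lam j)|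
          ≤ ∑ j ∈ Finset.univ.erase i0, |(⌊(N:ℝ) * lam j⌋₊ : ℝ) - (N:ℝ) * lam j| :=
            Finset.abs_sum_le_sum_abs _ _
        _ ≤ ∑ _j ∈ Finset.univ.erase i0, (1:ℝ) :=
            Finset.sum_le_sum (fun j _ => by
              rw [abs_le]
              constructor <;> nlinarith [hfl_le j, hfl_gt j])
        _ ≤ (m:ℝ) := by
            rw [Finset.sum_const, nsmul_eq_mul, mul_one]
            have : (Finset.univ.erase i0).card ≤ m := by
              calc (Finset.univ.erase i0).card ≤ Finset.univ.card :=
                Finset.card_le_card (Finset.erase_subset _ _)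
              _ = m := by simp
            exact_mod_cast this
    · simp only [if_neg h]
      apply habs
      rw [abs_le]
      constructor <;> nlinarith [hfl_le i, hfl_gt i]
end CPA3


namespace CPA4
open CPA
open scoped Kronecker

section kron
variable {I J : Type*} [Fintype I] [Fintype J] [DecidableEq I] [DecidableEq J]

lemma sum_kron {ι : Type*} (s : Finset ι) (A : ι → Matrix I I ℂ) (B : Matrix J J ℂ) :
    (∑ i ∈ s, A i) ⊗ₖ B = ∑ i ∈ s, (A i ⊗ₖ B) := by
  ext ⟨a, b⟩ ⟨c, e⟩
  simp [Matrix.sum_apply, Finset.sum_mul]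

lemma kron_sum {ι : Type*} (s : Finset ι) (A : Matrix I I ℂ) (B : ι → Matrix J J ℂ) :
    A ⊗ₖ (∑ i ∈ s, B i) = ∑ i ∈ s, (A ⊗ₖ B i) := by
  ext ⟨a, b⟩ ⟨c, e⟩
  simp [Matrix.sum_apply, Finset.mul_sum]

lemma kron_conjTranspose (A : Matrix I I ℂ) (B : Matrix J J ℂ) :
    (A ⊗ₖ B)ᴴ = Aᴴ ⊗ₖ Bᴴ := by
  ext ⟨a, b⟩ ⟨c, e⟩
  simp [Matrix.conjTranspose_apply, star_mul']

end kron

section G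
variable {d N : ℕ}

def gg (b b' : OrthonormalBasis (Fin d) ℂ (EuclideanSpace ℂ (Fin d))) (r r' : Fin d) : ℂ :=
  ∑ j, (starRingEnd ℂ) (uu b r j) * uu b' r' j

def G (b : OrthonormalBasis (Fin d) ℂ (EuclideanSpace ℂ (Fin d)))
    (D : Fin d → Matrix (Fin N × Fin N) (Fin N × Fin N) ℂ) :
    Matrix (Fin d × Fin N × Fin N) (Fin d × Fin N × Fin N) ℂ :=
  ∑ r, (ou (uu b r) (uu b r)) ⊗ₖ D r

lemma G_mul_G (b b' : OrthonormalBasis (Fin d) ℂ (EuclideanSpace ℂ (Fin d)))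
    (D D' : Fin d → Matrix (Fin N × Fin N) (Fin N × Fin N) ℂ) :
    G b D * G b' D' = ∑ r, ∑ r',
      (gg b b' r r' • ou (uu b r) (uu b' r')) ⊗ₖ (D r * D' r') := by
  rw [G, G, Finset.sum_mul_sum]
  refine Finset.sum_congr rfl fun r _ => Finset.sum_congr rfl fun r' _ => ?_
  rw [← Matrix.mul_kronecker_mul, ou_mul_ou]
  rfl

lemma G_mul_G_same (b : OrthonormalBasis (Fin d) ℂ (EuclideanSpace ℂ (Fin d)))
    (D D' : Fin d → Matrix (Fin N × Fin N) (Fin N × Fin N) ℂ) :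
    G b D * G b D' = G b (fun r => D r * D' r) := by
  classical
  rw [G_mul_G, G]
  refine Finset.sum_congr rfl fun r _ => ?_
  rw [Finset.sum_eq_single r]
  · have : gg b b r r = 1 := by rw [gg, col_ortho]; simp
    rw [this, one_smul]
  · intro r' _ hr'
    have : gg b b r r' = 0 := by rw [gg, col_ortho, if_neg (Ne.symm hr')]
    rw [this, zero_smul, Matrix.zero_kronecker]
  · intro h; exact absurd (Finset.mem_univ r) h

lemma G_herm (b : OrthonormalBasis (Fin d) ℂ (EuclideanSpace ℂ (Fin d)))
    (D : Fin d → Matrix (Fin N × Fin N) (Fin N × Fin N) ℂ)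
    (hD : ∀ r, (D r)ᴴ = D r) : (G b D)ᴴ = G b D := by
  rw [G, Matrix.conjTranspose_sum]
  refine Finset.sum_congr rfl fun r _ => ?_
  rw [kron_conjTranspose, ou_conjTranspose, hD]

lemma G_sum {m : ℕ} (b : OrthonormalBasis (Fin d) ℂ (EuclideanSpace ℂ (Fin d)))
    (D : Fin m → Fin d → Matrix (Fin N × Fin N) (Fin N × Fin N) ℂ) :
    ∑ i, G b (D i) = G b (fun r => ∑ i, D i r) := by
  simp only [G]
  rw [Finset.sum_comm]
  refine Finset.sum_congr rfl fun r _ => ?_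
  rw [kron_sum]

lemma G_one (b : OrthonormalBasis (Fin d) ℂ (EuclideanSpace ℂ (Fin d))) :
    G b (fun _ => (1 : Matrix (Fin N × Fin N) (Fin N × Fin N) ℂ)) = 1 := by
  rw [G, ← sum_kron, sum_ou, Matrix.one_kronecker_one]

lemma G_trace (b b' : OrthonormalBasis (Fin d) ℂ (EuclideanSpace ℂ (Fin d)))
    (D D' : Fin d → Matrix (Fin N × Fin N) (Fin N × Fin N) ℂ) :
    (G b D * G b' D').trace = ∑ r, ∑ r',
      gg b b' r r' * (starRingEnd ℂ) (gg b b' r r') * (D r * D' r').trace := by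
  rw [G_mul_G, Matrix.trace_sum]
  refine Finset.sum_congr rfl fun r _ => ?_
  rw [Matrix.trace_sum]
  refine Finset.sum_congr rfl fun r' _ => ?_
  rw [Matrix.smul_kronecker, Matrix.trace_smul, Matrix.trace_kronecker, ou_trace]
  have : ∑ k, uu b r k * (starRingEnd ℂ) (uu b' r' k) = (starRingEnd ℂ) (gg b b' r r') := by
    rw [gg, map_sum]
    refine Finset.sum_congr rfl fun k _ => ?_
    simp [mul_comm]
  rw [this]
  simp [smul_eq_mul]; ring

end G
end CPA4

namespace CPA5
open CPA CPA2 CPA3 CPA4 Matrix Complex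
open scoped Kronecker

lemma trace_submatrix_equiv' {I J : Type*} [Fintype I] [Fintype J] (e : I ≃ J)
    (M : Matrix J J ℂ) : (M.submatrix e e).trace = M.trace := by
  rw [Matrix.trace, Matrix.trace]
  exact Fintype.sum_equiv e _ _ (fun i => rfl)

lemma submatrix_sum {I J : Type*} [Fintype I] [Fintype J] {ι : Type*} (s : Finset ι)
    (M : ι → Matrix J J ℂ) (f : I → J) :
    (∑ i ∈ s, M i).submatrix f f = ∑ i ∈ s, (M i).submatrix f f := by
  ext a b
  simp [Matrix.sum_apply]

lemma diagonal_sum' {J : Type*} [Fintype J] [DecidableEq J] {ι : Type*} (s : Finset ι)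
    (χ : ι → J → ℂ) :
    ∑ i ∈ s, Matrix.diagonal (χ i) = Matrix.diagonal (fun t => ∑ i ∈ s, χ i t) := by
  ext a b
  by_cases h : a = b
  · subst h; simp [Matrix.sum_apply]
  · simp [Matrix.sum_apply, Matrix.diagonal_apply_ne _ h]

lemma trace_rep {d : ℕ} (b b' : OrthonormalBasis (Fin d) ℂ (EuclideanSpace ℂ (Fin d)))
    (c c' : Fin d → ℝ) :
    ((∑ r, (c r : ℂ) • ou (uu b r) (uu b r)) *
      (∑ r', (c' r' : ℂ) • ou (uu b' r') (uu b' r'))).trace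
      = ∑ r, ∑ r', (c r : ℂ) * (c' r' : ℂ)
          * (gg b b' r r' * (starRingEnd ℂ) (gg b b' r r')) := by
  rw [Finset.sum_mul_sum, Matrix.trace_sum]
  refine Finset.sum_congr rfl fun r _ => ?_
  rw [Matrix.trace_sum]
  refine Finset.sum_congr rfl fun r' _ => ?_
  rw [smul_mul_smul_comm, ou_mul_ou, Matrix.trace_smul, Matrix.trace_smul, ou_trace]
  have h1 : ∑ k, uu b r k * (starRingEnd ℂ) (uu b' r' k) = (starRingEnd ℂ) (gg b b' r r') := by
    rw [gg, map_sum]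
    refine Finset.sum_congr rfl fun k _ => ?_
    simp [mul_comm]
  rw [h1]
  simp only [smul_eq_mul, gg]

lemma sum_rearrange {nI nJ nR nR' : ℕ} (f : Fin nI → Fin nJ → Fin nR → Fin nR' → ℝ) :
    ∑ i, ∑ j, ∑ r, ∑ r', f i j r r' = ∑ r, ∑ r', ∑ i, ∑ j, f i j r r' :=
  calc ∑ i, ∑ j, ∑ r, ∑ r', f i j r r'
      = ∑ i, ∑ r, ∑ j, ∑ r', f i j r r' :=
        Finset.sum_congr rfl fun i _ => Finset.sum_comm
    _ = ∑ i, ∑ r, ∑ r', ∑ j, f i j r r' :=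
        Finset.sum_congr rfl fun i _ => Finset.sum_congr rfl fun r _ => Finset.sum_comm
    _ = ∑ r, ∑ i, ∑ r', ∑ j, f i j r r' := Finset.sum_comm
    _ = ∑ r, ∑ r', ∑ i, ∑ j, f i j r r' :=
        Finset.sum_congr rfl fun r _ => Finset.sum_comm

end CPA5

open CPA CPA2 CPA3 CPA4 CPA5 Matrix Complex
open scoped Kronecker

/-- STATEMENT 17: a correlation realized by commuting POVMs on `ℂ^d` can be approximated
arbitrarily well by maximally entangled correlations. -/
theorem commuting_povm_approx_Cmax {nA nB m d : ℕ} (hd : 1 ≤ d)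
    (p : Fin nA → Fin nB → Fin m → Fin m → ℝ) (hcorr : IsCorrelation p)
    (P : Fin nA → Fin m → Matrix (Fin d) (Fin d) ℂ)
    (Q : Fin nB → Fin m → Matrix (Fin d) (Fin d) ℂ)
    (hP : ∀ x, IsPOVM (P x)) (hQ : ∀ y, IsPOVM (Q y))
    (hrep : ∀ x y i j, (p x y i j : ℂ) = (1 / (d : ℂ)) * (P x i * Q y j).trace)
    (hPcomm : ∀ x i j, P x i * P x j = P x j * P x i)
    (hQcomm : ∀ y i j, Q y i * Q y j = Q y j * Q y i) :
    ∀ ε > (0 : ℝ), ∃ q ∈ Cmax nA nB m,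
      ∀ x y i j, |p x y i j - q x y i j| < ε := by
  intro ε hε
  classical
  rcases Nat.eq_zero_or_pos m with hm | hm
  · -- degenerate case m = 0
    subst hm
    rcases Nat.eq_zero_or_pos nA with hnA | hnA
    · rcases Nat.eq_zero_or_pos nB with hnB | hnB
      · subst hnA; subst hnB
        refine ⟨p, ?_, fun x => x.elim0⟩
        refine Set.mem_iUnion.mpr ⟨1, Set.mem_iUnion.mpr ⟨le_refl 1, ?_⟩⟩
        exact ⟨hcorr, fun x => x.elim0, fun y => y.elim0, fun x => x.elim0,
          fun y => y.elim0, fun x => x.elim0⟩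
      · exfalso
        have h1 := (hQ ⟨0, hnB⟩).2
        have h2 := congrFun (congrFun h1 ⟨0, hd⟩) ⟨0, hd⟩
        simp at h2
    · exfalso
      have h1 := (hP ⟨0, hnA⟩).2
      have h2 := congrFun (congrFun h1 ⟨0, hd⟩) ⟨0, hd⟩
      simp at h2
  · -- main case
    have hdR : (0:ℝ) < d := by exact_mod_cast hd
    choose bA lamA hlamA0 hlamA1 hArep using
      fun x => povm_spectral (fun i => (hP x).1 i) (hP x).2 (hPcomm x)
    choose bB lamB hlamB0 hlamB1 hBrep using
      fun y => povm_spectral (fun i => (hQ y).1 i) (hQ y).2 (hQcomm y)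
    obtain ⟨N, hN0, hNe⟩ : ∃ N : ℕ, 0 < N ∧ (2*m : ℝ)/N < ε := by
      obtain ⟨N, hN⟩ := exists_nat_gt ((2*m : ℝ)/ε)
      refine ⟨N + 1, Nat.succ_pos _, ?_⟩
      have hNpos : (0:ℝ) < (N:ℝ)+1 := by positivity
      have hN1 : (2*m:ℝ)/ε < (N:ℝ)+1 := by linarith
      rw [div_lt_iff₀ hε] at hN1
      rw [show ((N+1 : ℕ):ℝ) = (N:ℝ)+1 by push_cast; ring, div_lt_iff₀ hNpos]
      linarith
    have hNr : (0:ℝ) < N := by exact_mod_cast hN0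
    choose aA haA haAerr using fun (x : Fin nA) (r : Fin d) =>
      nat_approx hm (fun i => lamA x i r) (fun i => hlamA0 x i r) (hlamA1 x r) hN0
    choose aB haB haBerr using fun (y : Fin nB) (r : Fin d) =>
      nat_approx hm (fun i => lamB y i r) (fun i => hlamB0 y i r) (hlamB1 y r) hN0
    set g : Fin nA → Fin nB → Fin d → Fin d → ℂ :=
      fun x y r r' => gg (bA x) (bB y) r r' with hg
    set cc : Fin nA → Fin nB → Fin d → Fin d → ℝ :=
      fun x y r r' => Complex.normSq (g x y r r') with hcc
    have hcc0 : ∀ x y r r', 0 ≤ cc x y r r' := fun x y r r' => Complex.normSq_nonneg _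
    have hggconj : ∀ x y r r',
        g x y r r' * (starRingEnd ℂ) (g x y r r') = ((cc x y r r' : ℝ) : ℂ) := by
      intro x y r r'
      rw [Complex.mul_conj, hcc]
    have hinner : ∀ x y r r', (inner ℂ (bA x r) (bB y r') : ℂ) = g x y r r' := by
      intro x y r r'
      simp only [hg, PiLp.inner_apply, RCLike.inner_apply]
      rw [gg]; exact Finset.sum_congr rfl fun k _ => mul_comm _ _
    have hpars : ∀ x y r, ∑ r', cc x y r r' = 1 := by
      intro x y r
      have h1 := OrthonormalBasis.sum_inner_mul_inner (bB y) (bA x r) (bA x r)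
      have h2 : ∀ r' : Fin d, (inner ℂ (bA x r) (bB y r') : ℂ) * (inner ℂ (bB y r') (bA x r) : ℂ)
          = ((cc x y r r' : ℝ) : ℂ) := by
        intro r'
        have hswap : (inner ℂ (bB y r') (bA x r) : ℂ)
            = (starRingEnd ℂ) (inner ℂ (bA x r) (bB y r')) := (inner_conj_symm _ _).symm
        rw [hswap, hinner]
        exact hggconj x y r r'
      rw [Finset.sum_congr rfl fun r' _ => h2 r'] at h1
      have h3 : (inner ℂ (bA x r) (bA x r) : ℂ) = 1 := by
        have := orthonormal_iff_ite.mp (bA x).orthonormal r r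
        simpa using this
      rw [h3] at h1
      have h4 : ((∑ r', cc x y r r' : ℝ) : ℂ) = ((1:ℝ):ℂ) := by push_cast; exact h1
      exact_mod_cast h4
    have hpform : ∀ x y i j, p x y i j
        = (1/(d:ℝ)) * ∑ r, ∑ r', lamA x i r * lamB y j r' * cc x y r r' := by
      intro x y i j
      have h1 := hrep x y i j
      rw [hArep x i, hBrep y j, trace_rep] at h1
      have h2 : ∑ r, ∑ r', (lamA x i r : ℂ) * (lamB y j r' : ℂ)
            * (gg (bA x) (bB y) r r' * (starRingEnd ℂ) (gg (bA x) (bB y) r r'))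
          = ((∑ r, ∑ r', lamA x i r * lamB y j r' * cc x y r r' : ℝ) : ℂ) := by
        push_cast
        refine Finset.sum_congr rfl fun r _ => Finset.sum_congr rfl fun r' _ => ?_
        rw [show gg (bA x) (bB y) r r' = g x y r r' from rfl, hggconj]
      rw [h2] at h1
      have h3 : ((p x y i j : ℝ) : ℂ)
          = ((1/(d:ℝ) * ∑ r, ∑ r', lamA x i r * lamB y j r' * cc x y r r' : ℝ) : ℂ) := by
        rw [h1]; push_cast; ring
      exact_mod_cast h3
    set q : Fin nA → Fin nB → Fin m → Fin m → ℝ := fun x y i j =>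
      (1/(d:ℝ)) * ∑ r, ∑ r', ((aA x r i : ℝ)/N) * ((aB y r' j : ℝ)/N) * cc x y r r' with hq
    have hlamA_le1 : ∀ x i r, lamA x i r ≤ 1 := by
      intro x i r
      have h := hlamA1 x r
      have h2 := Finset.single_le_sum (f := fun i => lamA x i r)
        (fun i _ => hlamA0 x i r) (Finset.mem_univ i)
      linarith
    have haB_leN : ∀ y r' j, (aB y r' j : ℝ) ≤ N := by
      intro y r' j
      have h := haB y r'
      have h2 : aB y r' j ≤ N := h ▸ Finset.single_le_sum (f := fun j => aB y r' j)
        (fun _ _ => Nat.zero_le _) (Finset.mem_univ j)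
      exact_mod_cast h2
    -- error bound
    have herr : ∀ x y i j, |p x y i j - q x y i j| < ε := by
      intro x y i j
      have hterm : ∀ r r' : Fin d,
          |lamA x i r * lamB y j r' - ((aA x r i:ℝ)/N) * ((aB y r' j:ℝ)/N)| ≤ 2*m/N := by
        intro r r'
        have e1 := haAerr x r i
        have e2 := haBerr y r' j
        have hA0 := hlamA0 x i r
        have hA1 := hlamA_le1 x i r
        have hb0 : (0:ℝ) ≤ (aB y r' j:ℝ)/N := by positivity
        have hb1 : (aB y r' j:ℝ)/N ≤ 1 := by
          rw [div_le_one hNr]; exact haB_leN y r' j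
        have hsplit : lamA x i r * lamB y j r' - ((aA x r i:ℝ)/N) * ((aB y r' j:ℝ)/N)
            = lamA x i r * (lamB y j r' - (aB y r' j:ℝ)/N)
              + ((aB y r' j:ℝ)/N) * (lamA x i r - (aA x r i:ℝ)/N) := by ring
        rw [hsplit]
        have t1 : |lamA x i r * (lamB y j r' - (aB y r' j:ℝ)/N)| ≤ (m:ℝ)/N := by
          rw [abs_mul, _root_.abs_of_nonneg hA0]
          calc lamA x i r * |lamB y j r' - (aB y r' j:ℝ)/N| ≤ 1 * ((m:ℝ)/N) :=
            mul_le_mul hA1 e2 (abs_nonneg _) zero_le_one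
          _ = (m:ℝ)/N := one_mul _
        have t2 : |((aB y r' j:ℝ)/N) * (lamA x i r - (aA x r i:ℝ)/N)| ≤ (m:ℝ)/N := by
          rw [abs_mul, _root_.abs_of_nonneg hb0]
          calc ((aB y r' j:ℝ)/N) * |lamA x i r - (aA x r i:ℝ)/N| ≤ 1 * ((m:ℝ)/N) :=
            mul_le_mul hb1 e1 (abs_nonneg _) zero_le_one
          _ = (m:ℝ)/N := one_mul _
        calc |lamA x i r * (lamB y j r' - (aB y r' j:ℝ)/N)
              + ((aB y r' j:ℝ)/N) * (lamA x i r - (aA x r i:ℝ)/N)|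
            ≤ |lamA x i r * (lamB y j r' - (aB y r' j:ℝ)/N)|
              + |((aB y r' j:ℝ)/N) * (lamA x i r - (aA x r i:ℝ)/N)| := abs_add_le _ _
          _ ≤ (m:ℝ)/N + (m:ℝ)/N := add_le_add t1 t2
          _ = 2*(m:ℝ)/N := by ring
      have hsplit2 : p x y i j - q x y i j
          = (1/(d:ℝ)) * ∑ r, ∑ r',
              (lamA x i r * lamB y j r' - ((aA x r i:ℝ)/N) * ((aB y r' j:ℝ)/N))
                * cc x y r r' := by
        rw [hpform x y i j, hq]
        rw [← mul_sub, ← Finset.sum_sub_distrib]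
        congr 1
        refine Finset.sum_congr rfl fun r _ => ?_
        rw [← Finset.sum_sub_distrib]
        refine Finset.sum_congr rfl fun r' _ => by ring
      have habs2 : |p x y i j - q x y i j| ≤ 2*(m:ℝ)/N := by
        rw [hsplit2, abs_mul, _root_.abs_of_pos (by positivity : (0:ℝ) < 1/(d:ℝ))]
        have hb : |∑ r, ∑ r',
            (lamA x i r * lamB y j r' - ((aA x r i:ℝ)/N) * ((aB y r' j:ℝ)/N)) * cc x y r r'|
            ≤ 2*(m:ℝ)/N * (d:ℝ) := by
          calc |∑ r, ∑ r', (lamA x i r * lamB y j r'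
                  - ((aA x r i:ℝ)/N) * ((aB y r' j:ℝ)/N)) * cc x y r r'|
              ≤ ∑ r, |∑ r', (lamA x i r * lamB y j r'
                  - ((aA x r i:ℝ)/N) * ((aB y r' j:ℝ)/N)) * cc x y r r'| :=
                Finset.abs_sum_le_sum_abs _ _
            _ ≤ ∑ r, ∑ r', |(lamA x i r * lamB y j r'
                  - ((aA x r i:ℝ)/N) * ((aB y r' j:ℝ)/N)) * cc x y r r'| :=
                Finset.sum_le_sum fun r _ => Finset.abs_sum_le_sum_abs _ _
            _ ≤ ∑ r, ∑ r', (2*(m:ℝ)/N) * cc x y r r' := by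
                refine Finset.sum_le_sum fun r _ => Finset.sum_le_sum fun r' _ => ?_
                rw [abs_mul, _root_.abs_of_nonneg (hcc0 x y r r')]
                exact mul_le_mul_of_nonneg_right (hterm r r') (hcc0 x y r r')
            _ = 2*(m:ℝ)/N * (d:ℝ) := by
                rw [Finset.sum_congr rfl fun r (_ : r ∈ Finset.univ) => by
                  rw [← Finset.mul_sum, hpars x y r, mul_one]]
                rw [Finset.sum_const, Finset.card_univ, Fintype.card_fin, nsmul_eq_mul]
                ring
        calc (1/(d:ℝ)) * |∑ r, ∑ r', (lamA x i r * lamB y j r'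
                - ((aA x r i:ℝ)/N) * ((aB y r' j:ℝ)/N)) * cc x y r r'|
            ≤ (1/(d:ℝ)) * (2*(m:ℝ)/N * (d:ℝ)) := by
              exact mul_le_mul_of_nonneg_left hb (by positivity)
          _ = 2*(m:ℝ)/N := by field_simp
      exact lt_of_le_of_lt habs2 hNe
    refine ⟨q, ?_, herr⟩

    -- membership in Cmax
    set Dn : ℕ := d * (N * N) with hDdef
    have hD1 : 1 ≤ Dn := by
      have h1 : 0 < d * (N * N) := Nat.mul_pos (by omega) (Nat.mul_pos hN0 hN0)
      omega
    set e : (Fin d × Fin N × Fin N) ≃ Fin Dn :=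
      ((Equiv.refl (Fin d)).prodCongr finProdFinEquiv).trans finProdFinEquiv with he
    set χA : Fin nA → Fin m → Fin d → Fin N → ℂ := fun x i r s =>
      if A (fun i' => aA x r i') i.val ≤ s.val ∧ s.val < A (fun i' => aA x r i') (i.val+1)
      then 1 else 0 with hχA
    set χB : Fin nB → Fin m → Fin d → Fin N → ℂ := fun y j r s =>
      if A (fun j' => aB y r j') j.val ≤ s.val ∧ s.val < A (fun j' => aB y r j') (j.val+1)
      then 1 else 0 with hχB
    have hχA_star : ∀ x i r, star (χA x i r) = χA x i r := by
      intro x i r; funext s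
      simp only [hχA, Pi.star_apply]
      split <;> simp
    have hχB_star : ∀ y j r, star (χB y j r) = χB y j r := by
      intro y j r; funext s
      simp only [hχB, Pi.star_apply]
      split <;> simp
    have hχA_sq : ∀ x i r, (fun s => χA x i r s * χA x i r s) = χA x i r := by
      intro x i r; funext s
      simp only [hχA]
      split <;> simp
    have hχB_sq : ∀ y j r, (fun s => χB y j r s * χB y j r s) = χB y j r := by
      intro y j r; funext s
      simp only [hχB]
      split <;> simp
    have hχA_sum : ∀ x r s, ∑ i, χA x i r s = 1 := by
      intro x r s
      simpa [hχA] using sum_indicator_eq_one hm (fun i' => aA x r i') (haA x r) s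
    have hχB_sum : ∀ y r s, ∑ j, χB y j r s = 1 := by
      intro y r s
      simpa [hχB] using sum_indicator_eq_one hm (fun j' => aB y r j') (haB y r) s
    have hχA_count : ∀ x i r, ∑ s, χA x i r s = (aA x r i : ℂ) := by
      intro x i r
      simpa [hχA] using count_indicator (fun i' => aA x r i') (haA x r) i
    have hχB_count : ∀ y j r, ∑ s, χB y j r s = (aB y r j : ℂ) := by
      intro y j r
      simpa [hχB] using count_indicator (fun j' => aB y r j') (haB y r) j
    set DA : Fin nA → Fin m → Fin d → Matrix (Fin N × Fin N) (Fin N × Fin N) ℂ :=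
      fun x i r => Matrix.diagonal (χA x i r) ⊗ₖ (1 : Matrix (Fin N) (Fin N) ℂ) with hDA
    set DB : Fin nB → Fin m → Fin d → Matrix (Fin N × Fin N) (Fin N × Fin N) ℂ :=
      fun y j r => (1 : Matrix (Fin N) (Fin N) ℂ) ⊗ₖ Matrix.diagonal (χB y j r) with hDB
    set Er : Fin nA → Fin m → Matrix (Fin Dn) (Fin Dn) ℂ :=
      fun x i => (G (bA x) (DA x i)).submatrix e.symm e.symm with hEr
    set Fr : Fin nB → Fin m → Matrix (Fin Dn) (Fin Dn) ℂ :=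
      fun y j => (G (bB y) (DB y j)).submatrix e.symm e.symm with hFr
    have hDA_herm : ∀ x i r, (DA x i r)ᴴ = DA x i r := by
      intro x i r
      simp only [hDA]
      rw [kron_conjTranspose, Matrix.conjTranspose_one, Matrix.diagonal_conjTranspose,
        hχA_star]
    have hDB_herm : ∀ y j r, (DB y j r)ᴴ = DB y j r := by
      intro y j r
      simp only [hDB]
      rw [kron_conjTranspose, Matrix.conjTranspose_one, Matrix.diagonal_conjTranspose,
        hχB_star]
    have hDA_sq : ∀ x i r, DA x i r * DA x i r = DA x i r := by
      intro x i r
      simp only [hDA]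
      rw [← Matrix.mul_kronecker_mul, Matrix.diagonal_mul_diagonal, hχA_sq, Matrix.one_mul]
    have hDB_sq : ∀ y j r, DB y j r * DB y j r = DB y j r := by
      intro y j r
      simp only [hDB]
      rw [← Matrix.mul_kronecker_mul, Matrix.diagonal_mul_diagonal, hχB_sq, Matrix.one_mul]
    have hDA_sum : ∀ x r, ∑ i, DA x i r = 1 := by
      intro x r
      simp only [hDA]
      rw [← sum_kron, diagonal_sum']
      have h1 : (fun t => ∑ i, χA x i r t) = fun _ => (1:ℂ) := funext fun t => hχA_sum x r t
      rw [h1, Matrix.diagonal_one, Matrix.one_kronecker_one]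
    have hDB_sum : ∀ y r, ∑ j, DB y j r = 1 := by
      intro y r
      simp only [hDB]
      rw [← kron_sum, diagonal_sum']
      have h1 : (fun t => ∑ j, χB y j r t) = fun _ => (1:ℂ) := funext fun t => hχB_sum y r t
      rw [h1, Matrix.diagonal_one, Matrix.one_kronecker_one]
    have hEpvm : ∀ x, IsPVM (Er x) := by
      intro x
      refine ⟨fun i => ?_, fun i => ?_, ?_⟩
      · show (Er x i)ᴴ = Er x i
        simp only [hEr]
        rw [Matrix.conjTranspose_submatrix, G_herm (bA x) (DA x i) (hDA_herm x i)]
      · show Er x i * Er x i = Er x i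
        simp only [hEr]
        rw [Matrix.submatrix_mul_equiv, G_mul_G_same]
        have h2 : (fun r => DA x i r * DA x i r) = DA x i := funext fun r => hDA_sq x i r
        rw [h2]
      · show ∑ i, Er x i = 1
        simp only [hEr]
        rw [← submatrix_sum, G_sum]
        have h1 : (fun r => ∑ i, DA x i r)
            = fun _ => (1 : Matrix (Fin N × Fin N) (Fin N × Fin N) ℂ) :=
          funext fun r => hDA_sum x r
        rw [h1, G_one, Matrix.submatrix_one_equiv]
    have hFpvm : ∀ y, IsPVM (Fr y) := by
      intro y
      refine ⟨fun j => ?_, fun j => ?_, ?_⟩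
      · show (Fr y j)ᴴ = Fr y j
        simp only [hFr]
        rw [Matrix.conjTranspose_submatrix, G_herm (bB y) (DB y j) (hDB_herm y j)]
      · show Fr y j * Fr y j = Fr y j
        simp only [hFr]
        rw [Matrix.submatrix_mul_equiv, G_mul_G_same]
        have h2 : (fun r => DB y j r * DB y j r) = DB y j := funext fun r => hDB_sq y j r
        rw [h2]
      · show ∑ j, Fr y j = 1
        simp only [hFr]
        rw [← submatrix_sum, G_sum]
        have h1 : (fun r => ∑ j, DB y j r)
            = fun _ => (1 : Matrix (Fin N × Fin N) (Fin N × Fin N) ℂ) :=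
          funext fun r => hDB_sum y r
        rw [h1, G_one, Matrix.submatrix_one_equiv]
    have hDtrace : ∀ x y i j r r', (DA x i r * DB y j r').trace
        = (aA x r i : ℂ) * (aB y r' j : ℂ) := by
      intro x y i j r r'
      simp only [hDA, hDB]
      rw [← Matrix.mul_kronecker_mul, Matrix.mul_one, Matrix.one_mul,
        Matrix.trace_kronecker, Matrix.trace_diagonal, Matrix.trace_diagonal,
        hχA_count, hχB_count]
    have hgg2 : ∀ x y r r', gg (bA x) (bB y) r r' = g x y r r' := by
      intro x y r r'; rw [hg]
    have htrace : ∀ x y i j, (Er x i * Fr y j).trace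
        = ∑ r, ∑ r', ((cc x y r r' : ℝ) : ℂ) * (aA x r i : ℂ) * (aB y r' j : ℂ) := by
      intro x y i j
      simp only [hEr, hFr]
      rw [Matrix.submatrix_mul_equiv, trace_submatrix_equiv', G_trace]
      refine Finset.sum_congr rfl fun r _ => Finset.sum_congr rfl fun r' _ => ?_
      rw [hDtrace x y i j r r', hgg2, hggconj]
      ring
    have hqnn : ∀ x y i j, 0 ≤ q x y i j := by
      intro x y i j
      simp only [hq]
      apply mul_nonneg (by positivity)
      refine Finset.sum_nonneg fun r _ => Finset.sum_nonneg fun r' _ => ?_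
      have h1 := hcc0 x y r r'
      positivity
    have hqsum : ∀ x y, ∑ i, ∑ j, q x y i j = 1 := by
      intro x y
      simp only [hq, ← Finset.mul_sum]
      rw [sum_rearrange]
      have hinner2 : ∀ r r', ∑ i, ∑ j, ((aA x r i : ℝ)/N) * ((aB y r' j : ℝ)/N) * cc x y r r'
          = cc x y r r' := by
        intro r r'
        have hsA : ∑ i, (aA x r i:ℝ) = N := by exact_mod_cast haA x r
        have hsB : ∑ j, (aB y r' j:ℝ) = N := by exact_mod_cast haB y r'
        have hexp : (∑ i, (aA x r i:ℝ)/N) * (∑ j, (aB y r' j:ℝ)/N) * cc x y r r'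
            = ∑ i, ∑ j, ((aA x r i:ℝ)/N) * ((aB y r' j:ℝ)/N) * cc x y r r' := by
          rw [Finset.sum_mul_sum, Finset.sum_mul]
          exact Finset.sum_congr rfl fun i _ => by rw [Finset.sum_mul]
        rw [← hexp]
        have hsA' : ∑ i, (aA x r i:ℝ)/N = 1 := by
          rw [← Finset.sum_div, hsA, div_self (ne_of_gt hNr)]
        have hsB' : ∑ j, (aB y r' j:ℝ)/N = 1 := by
          rw [← Finset.sum_div, hsB, div_self (ne_of_gt hNr)]
        rw [hsA', hsB', one_mul, one_mul]
      rw [Finset.sum_congr rfl fun r (_ : r ∈ Finset.univ) =>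
        Finset.sum_congr rfl fun r' (_ : r' ∈ Finset.univ) => hinner2 r r']
      rw [Finset.sum_congr rfl fun r (_ : r ∈ Finset.univ) => hpars x y r]
      rw [Finset.sum_const, Finset.card_univ, Fintype.card_fin, nsmul_eq_mul, mul_one]
      field_simp
    have hqc : ∀ x y i j, ((q x y i j : ℝ) : ℂ) = (1/(Dn:ℂ)) * (Er x i * Fr y j).trace := by
      intro x y i j
      rw [htrace]
      have h1 : ∀ r r' : Fin d, ((aA x r i : ℝ)/N) * ((aB y r' j : ℝ)/N) * cc x y r r'
          = (1/((N:ℝ)*N)) * (cc x y r r' * (aA x r i:ℝ) * (aB y r' j:ℝ)) := by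
        intro r r'; field_simp
      have hqD : q x y i j
          = (1/(Dn:ℝ)) * ∑ r, ∑ r', cc x y r r' * (aA x r i:ℝ) * (aB y r' j:ℝ) := by
        simp only [hq]
        rw [Finset.sum_congr rfl fun r (_ : r ∈ Finset.univ) =>
          Finset.sum_congr rfl fun r' (_ : r' ∈ Finset.univ) => h1 r r']
        simp only [← Finset.mul_sum]
        rw [← mul_assoc, hDdef]
        congr 1
        push_cast
        field_simp
      rw [hqD]
      push_cast
      ring_nf
    exact Set.mem_iUnion.mpr ⟨Dn, Set.mem_iUnion.mpr ⟨hD1,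
      ⟨⟨hqnn, hqsum⟩, Er, Fr, hEpvm, hFpvm, hqc⟩⟩⟩
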